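/- Let β : ℂ → ℂ be continuous and strictly monotone with constant α > 0, i.e. Re⟨β(z) − β(z'), z − z'⟩ ≥ α·|z − z'|² for all z, z' ∈ ℂ. Then β is bijective and its inverse γ := β⁻¹ : ℂ → ℂ satisfies: (i) Re⟨x − y, γ(x) − γ(y)⟩ ≥ α·|γ(x) − γ(y)|² for all x, y ∈ ℂ (so γ is monotone), and (ii) |γ(x) − γ(y)| ≤ (1/α)·|x − y| for all x, y ∈ ℂ (so γ is (1/α)-Lipschitz). -/

import Mathlib

private lemma mono_surj_aux (f : ℝ → ℝ) (hf : Continuous f) (α : ℝ) (hα : 0 < α)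
    (h : ∀ y y' : ℝ, α * (y - y')^2 ≤ (f y - f y') * (y - y')) : Function.Surjective f := by
  have key : ∀ y y' : ℝ, y' ≤ y → f y' + α * (y - y') ≤ f y := by
    intro y y' hle
    rcases eq_or_lt_of_le hle with rfl | hlt
    · simp
    · have := h y y'; nlinarith
  apply hf.surjective
  · refine Filter.tendsto_atTop_mono' Filter.atTop
      (Filter.eventually_atTop.mpr ⟨0, fun y hy => key y 0 hy⟩) ?_
    simpa using Filter.tendsto_atTop_add_const_left Filter.atTop (f 0)
      ((Filter.tendsto_id (α := ℝ)).const_mul_atTop hα)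
  · refine Filter.tendsto_atBot_mono' Filter.atBot (f₁ := fun y => f 0 + α * y)
      (Filter.eventually_atBot.mpr ⟨0, fun y hy =>
        show f y ≤ f 0 + α * y by have := key 0 y hy; nlinarith⟩) ?_
    exact Filter.tendsto_atBot_add_const_left Filter.atBot (f 0)
      ((Filter.tendsto_id (α := ℝ)).const_mul_atBot hα)

private lemma stmt3_surj (β : ℂ → ℂ) (hcont : Continuous β) (α : ℝ) (hα : 0 < α)
    (hmono : ∀ z z' : ℂ,
      (starRingEnd ℂ (β z - β z') * (z - z')).re ≥ α * ‖z - z'‖ ^ 2) :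
    Function.Surjective β := by
  have hre : ∀ z z' : ℂ, α * ((z.re - z'.re)^2 + (z.im - z'.im)^2) ≤
      ((β z).re - (β z').re) * (z.re - z'.re) + ((β z).im - (β z').im) * (z.im - z'.im) := by
    intro z z'
    have h := hmono z z'
    rw [ge_iff_le, Complex.sq_norm, Complex.normSq_apply] at h
    simp only [Complex.mul_re, Complex.sub_re, Complex.sub_im, Complex.conj_re,
      Complex.conj_im] at h
    nlinarith [h]
  intro w
  set Z : ℝ → ℝ → ℂ := fun x y => (x:ℂ) + y * Complex.I with hZ
  have hZre : ∀ x y, (Z x y).re = x := by intro x y; simp [hZ]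
  have hZim : ∀ x y, (Z x y).im = y := by intro x y; simp [hZ]
  have hZcont : Continuous fun p : ℝ × ℝ => Z p.1 p.2 := by
    simp only [hZ]; fun_prop
  set g : ℝ → ℝ → ℝ := fun x y => (β (Z x y)).im with hg
  have hgmono : ∀ x y y' : ℝ, α * (y - y')^2 ≤ (g x y - g x y') * (y - y') := by
    intro x y y'
    have h := hre (Z x y) (Z x y')
    simp only [hZre, hZim, hg] at h ⊢
    nlinarith [h]
  have hgcont : Continuous fun p : ℝ × ℝ => g p.1 p.2 := by
    simp only [hg]; exact Complex.continuous_im.comp (hcont.comp hZcont)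
  -- step 1 : solve imaginary part
  have hsurj1 : ∀ x : ℝ, ∃ y, g x y = w.im := by
    intro x
    have hconty : Continuous (g x) :=
      hgcont.comp (Continuous.prodMk_right x)
    exact mono_surj_aux (g x) hconty α hα (hgmono x) w.im
  choose φ hφ using hsurj1
  -- monotone comparison in y
  have hgle : ∀ x y y' : ℝ, y' ≤ y → g x y' ≤ g x y := by
    intro x y y' hle
    rcases eq_or_lt_of_le hle with rfl | hlt
    · exact le_refl _
    · have := hgmono x y y'; nlinarith
  -- step 2 : φ continuous
  have hφcont : Continuous φ := by
    rw [continuous_iff_continuousAt]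
    intro x₀
    rw [ContinuousAt, Metric.tendsto_nhds]
    intro ε hε
    have hc1 : Continuous fun x => g x (φ x₀ + ε) :=
      hgcont.comp (continuous_id.prodMk continuous_const)
    have hc2 : Continuous fun x => g x (φ x₀ - ε) :=
      hgcont.comp (continuous_id.prodMk continuous_const)
    have hv1 : w.im < g x₀ (φ x₀ + ε) := by
      have h' := hgmono x₀ (φ x₀ + ε) (φ x₀)
      rw [hφ x₀, show φ x₀ + ε - φ x₀ = ε by ring] at h'
      nlinarith [mul_pos hα (pow_pos hε 2)]
    have hv2 : g x₀ (φ x₀ - ε) < w.im := by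
      have h' := hgmono x₀ (φ x₀) (φ x₀ - ε)
      rw [hφ x₀, show φ x₀ - (φ x₀ - ε) = ε by ring] at h'
      nlinarith [mul_pos hα (pow_pos hε 2)]
    have h1 : ∀ᶠ x in nhds x₀, w.im < g x (φ x₀ + ε) :=
      (hc1.continuousAt (x := x₀)).eventually_const_lt hv1
    have h2 : ∀ᶠ x in nhds x₀, g x (φ x₀ - ε) < w.im :=
      (hc2.continuousAt (x := x₀)).eventually_lt_const hv2
    filter_upwards [h1, h2] with x hx1 hx2
    rw [Real.dist_eq, abs_sub_lt_iff]
    constructor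
    · by_contra hcon
      push_neg at hcon
      have := hgle x (φ x) (φ x₀ + ε) (by linarith)
      rw [hφ x] at this; linarith
    · by_contra hcon
      push_neg at hcon
      have := hgle x (φ x₀ - ε) (φ x) (by linarith)
      rw [hφ x] at this; linarith
  -- step 3 : solve real part
  set h : ℝ → ℝ := fun x => (β (Z x (φ x))).re with hh
  have hhcont : Continuous h := by
    simp only [hh]
    exact Complex.continuous_re.comp (hcont.comp
      (hZcont.comp (continuous_id.prodMk hφcont)))
  have hhmono : ∀ x x' : ℝ, α * (x - x')^2 ≤ (h x - h x') * (x - x') := by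
    intro x x'
    have h0 := hre (Z x (φ x)) (Z x' (φ x'))
    simp only [hZre, hZim] at h0
    have e1 : (β (Z x (φ x))).im = w.im := hφ x
    have e2 : (β (Z x' (φ x'))).im = w.im := hφ x'
    rw [e1, e2] at h0
    simp only [hh]
    nlinarith [h0, sq_nonneg (φ x - φ x')]
  obtain ⟨x, hx⟩ := mono_surj_aux h hhcont α hα hhmono w.re
  refine ⟨Z x (φ x), ?_⟩
  apply Complex.ext
  · exact hx
  · exact hφ x

theorem stmt3 (β : ℂ → ℂ) (hcont : Continuous β) (α : ℝ) (hα : 0 < α)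
    (hmono : ∀ z z' : ℂ,
      (starRingEnd ℂ (β z - β z') * (z - z')).re ≥ α * ‖z - z'‖ ^ 2) :
    Function.Bijective β ∧
    ∃ γ : ℂ → ℂ, Function.LeftInverse γ β ∧ Function.RightInverse γ β ∧
      (∀ x y : ℂ,
        (starRingEnd ℂ (x - y) * (γ x - γ y)).re ≥ α * ‖γ x - γ y‖ ^ 2) ∧
      (∀ x y : ℂ, ‖γ x - γ y‖ ≤ (1 / α) * ‖x - y‖) := by
  have hlip : ∀ z z' : ℂ, α * ‖z - z'‖ ≤ ‖β z - β z'‖ := by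
    intro z z'
    rcases eq_or_ne z z' with rfl | hne
    · simp
    · have h := hmono z z'
      have hcs : (starRingEnd ℂ (β z - β z') * (z - z')).re ≤
          ‖β z - β z'‖ * ‖z - z'‖ := by
        calc (starRingEnd ℂ (β z - β z') * (z - z')).re
            ≤ ‖starRingEnd ℂ (β z - β z') * (z - z')‖ := Complex.re_le_norm _
          _ = ‖β z - β z'‖ * ‖z - z'‖ := by
              rw [norm_mul, Complex.norm_conj]
      have hpos : 0 < ‖z - z'‖ := by
        simpa [sub_eq_zero] using (norm_pos_iff.mpr (sub_ne_zero.mpr hne))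
      nlinarith [h]
  have hinj : Function.Injective β := by
    intro a b hab
    have := hlip a b
    rw [hab, sub_self] at this
    simp only [norm_zero] at this
    have : ‖a - b‖ ≤ 0 := by nlinarith [norm_nonneg (a - b)]
    have := le_antisymm this (norm_nonneg _)
    rwa [norm_eq_zero, sub_eq_zero] at this
  have hsurj := stmt3_surj β hcont α hα hmono
  refine ⟨⟨hinj, hsurj⟩, Function.invFun β, Function.leftInverse_invFun hinj,
    Function.rightInverse_invFun hsurj, ?_, ?_⟩
  · intro x y
    have hx : β (Function.invFun β x) = x := Function.rightInverse_invFun hsurj x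
    have hy : β (Function.invFun β y) = y := Function.rightInverse_invFun hsurj y
    have := hmono (Function.invFun β x) (Function.invFun β y)
    rwa [hx, hy] at this
  · intro x y
    have hx : β (Function.invFun β x) = x := Function.rightInverse_invFun hsurj x
    have hy : β (Function.invFun β y) = y := Function.rightInverse_invFun hsurj y
    have h := hlip (Function.invFun β x) (Function.invFun β y)
    rw [hx, hy] at h
    rw [div_mul_eq_mul_div, le_div_iff₀ hα, mul_comm]
    linarith
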